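/- Let F : F_{p^n} → F_{p^n} be an (n,n)-function. If there exists c ∈ F_{p^n}, c ≠ 0, such that the algebraic degree of the component function Tr(cF) is neither 0, 1, nor equal to the algebraic degree of F, then F is not EA-equivalent to any power function x ↦ x^s. -/

import Mathlib

/-- A function has algebraic degree at most `d` iff all `(d+1)`-fold discrete
derivatives vanish identically. -/
def degLE {V W : Type*} [AddCommGroup V] [AddCommGroup W] : (V → W) → ℕ → Prop
  | F, 0 => ∀ γ x, F (x + γ) - F x = 0
  | F, (d + 1) => ∀ γ, degLE (fun x => F (x + γ) - F x) d

/-- The algebraic degree of a function. -/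
noncomputable def algDeg {V W : Type*} [AddCommGroup V] [AddCommGroup W] (F : V → W) : ℕ :=
  sInf {d | degLE F d}

section DegLE
variable {V V' W W' : Type*} [AddCommGroup V] [AddCommGroup V'] [AddCommGroup W] [AddCommGroup W']

theorem degLE_congr {f g : V → W} (h : ∀ x, f x = g x) {d : ℕ} (hf : degLE f d) : degLE g d := by
  have : f = g := funext h
  exact this ▸ hf

theorem degLE_zero_fun : ∀ d : ℕ, degLE (fun _ : V => (0 : W)) d
  | 0 => fun γ x => by simp
  | d + 1 => fun γ => degLE_congr (fun x => by simp) (degLE_zero_fun d)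

theorem degLE_add : ∀ (d : ℕ) {f g : V → W}, degLE f d → degLE g d →
    degLE (fun x => f x + g x) d
  | 0, f, g, hf, hg => fun γ x => by
      show f (x + γ) + g (x + γ) - (f x + g x) = 0
      rw [add_sub_add_comm, hf γ x, hg γ x, add_zero]
  | d + 1, f, g, hf, hg => fun γ =>
      degLE_congr (fun x => by show _ = _ - _; rw [add_sub_add_comm])
        (degLE_add d (hf γ) (hg γ))

theorem degLE_postcomp (φ : W →+ W') : ∀ (d : ℕ) {f : V → W}, degLE f d →
    degLE (fun x => φ (f x)) d
  | 0, f, hf => fun γ x => by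
      show φ (f (x + γ)) - φ (f x) = 0
      rw [← map_sub, hf γ x, map_zero]
  | d + 1, f, hf => fun γ =>
      degLE_congr (fun x => map_sub φ _ _) (degLE_postcomp φ d (hf γ))

theorem degLE_of_postcomp (φ : W →+ W') (hφ : Function.Injective φ) :
    ∀ (d : ℕ) {f : V → W}, degLE (fun x => φ (f x)) d → degLE f d
  | 0, f, hf => fun γ x => by
      apply hφ
      rw [map_sub, hf γ x, map_zero]
  | d + 1, f, hf => fun γ =>
      degLE_of_postcomp φ hφ d (degLE_congr (fun x => (map_sub φ _ _).symm) (hf γ))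

theorem degLE_neg {d : ℕ} {f : V → W} (hf : degLE f d) : degLE (fun x => - f x) d :=
  degLE_postcomp (negAddMonoidHom) d hf

theorem degLE_sub {d : ℕ} {f g : V → W} (hf : degLE f d) (hg : degLE g d) :
    degLE (fun x => f x - g x) d :=
  degLE_congr (fun x => (sub_eq_add_neg _ _).symm) (degLE_add d hf (degLE_neg hg))

theorem degLE_precomp (A : V' →+ V) (b : V) : ∀ (d : ℕ) {f : V → W}, degLE f d →
    degLE (fun x => f (A x + b)) d
  | 0, f, hf => fun γ x => by
      have := hf (A γ) (A x + b)
      show f (A (x + γ) + b) - f (A x + b) = 0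
      rwa [map_add, add_right_comm]
  | d + 1, f, hf => fun γ => by
      have := degLE_precomp A b d (hf (A γ))
      exact degLE_congr (fun x => by simp only [map_add]; rw [add_right_comm]) this

theorem degLE_succ : ∀ (d : ℕ) {f : V → W}, degLE f d → degLE f (d + 1)
  | 0, f, hf => fun γ => degLE_congr (fun x => by rw [hf γ x]) (degLE_zero_fun 0)
  | d + 1, f, hf => fun γ => degLE_succ d (hf γ)

theorem degLE_mono {d d' : ℕ} (h : d ≤ d') {f : V → W} (hf : degLE f d) : degLE f d' := by
  induction h with
  | refl => exact hf
  | step _ ih => exact degLE_succ _ ih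

theorem degLE_sum {ι : Type*} (t : Finset ι) (f : ι → V → W) {d : ℕ}
    (h : ∀ i ∈ t, degLE (f i) d) : degLE (fun x => ∑ i ∈ t, f i x) d := by
  classical
  induction t using Finset.induction with
  | empty => exact degLE_congr (fun x => by simp) (degLE_zero_fun d)
  | insert a t' hni ih =>
      exact degLE_congr (fun x => (Finset.sum_insert hni).symm)
        (degLE_add d (h a (Finset.mem_insert_self a t'))
          (ih fun i hi => h i (Finset.mem_insert_of_mem hi)))

theorem degLE_const (w : W) : degLE (fun _ : V => w) 1 :=
  fun γ => degLE_congr (fun x => by simp) (degLE_zero_fun 0)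

theorem degLE_one_affine (φ : V →+ W) (b : W) : degLE (fun x => φ x + b) 1 := by
  intro γ γ' x
  show φ (x + γ' + γ) + b - (φ (x + γ') + b) - (φ (x + γ) + b - (φ x + b)) = 0
  simp only [map_add]; abel

theorem exists_addHom_of_degLE_one {f : V → W} (hf : degLE f 1) :
    ∃ φ : V →+ W, ∀ x, f x = φ x + f 0 := by
  have key : ∀ a b : V, f (a + b) = f a + f b - f 0 := by
    intro a b
    have h1 : (f (0 + a + b) - f (0 + a)) - (f (0 + b) - f 0) = 0 := hf b a 0
    simp only [zero_add] at h1
    have h2 : f (a + b) - f a = f b - f 0 := sub_eq_zero.mp h1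
    have h3 : f (a + b) = f b - f 0 + f a := by rw [← h2]; abel
    rw [h3]; abel
  refine ⟨AddMonoidHom.mk' (fun x => f x - f 0) ?_, fun x => by
    show f x = f x - f 0 + f 0; rw [sub_add_cancel]⟩
  intro a b
  show f (a + b) - f 0 = (f a - f 0) + (f b - f 0)
  rw [key a b]; abel

end DegLE

/-- Sum of base-`p` digits. -/
def pwt (p e : ℕ) : ℕ := (Nat.digits p e).sum

section Pwt
variable {p : ℕ} [hp : Fact p.Prime]

omit hp in
theorem pwt_zero : pwt p 0 = 0 := by simp [pwt]

theorem pwt_def {n : ℕ} (hn : n ≠ 0) : pwt p n = n % p + pwt p (n / p) := by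
  unfold pwt
  rw [Nat.digits_def' hp.out.one_lt (Nat.pos_of_ne_zero hn), List.sum_cons]

theorem pwt_lt {r : ℕ} (hr : r < p) : pwt p r = r := by
  rcases Nat.eq_zero_or_pos r with h | h
  · simp [h, pwt_zero]
  · rw [pwt_def h.ne', Nat.mod_eq_of_lt hr, Nat.div_eq_of_lt hr, pwt_zero, Nat.add_zero]

theorem pwt_add_pow_mul {j : ℕ} : ∀ t u : ℕ, t < p ^ j →
    pwt p (t + p ^ j * u) = pwt p t + pwt p u := by
  induction j with
  | zero =>
    intro t u ht
    have : t = 0 := by simpa using ht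
    simp [this, pwt_zero]
  | succ j ih =>
    intro t u ht
    rcases Nat.eq_zero_or_pos u with hu | hu
    · simp [hu, pwt_zero]
    have hne : t + p ^ (j + 1) * u ≠ 0 := by
      have : 0 < p ^ (j + 1) * u := Nat.mul_pos (Nat.pow_pos hp.out.pos) hu
      omega
    have h1 : (t + p ^ (j + 1) * u) % p = t % p := by
      rw [pow_succ, mul_comm (p ^ j) p, mul_assoc, Nat.add_mul_mod_self_left]
    have h2 : (t + p ^ (j + 1) * u) / p = t / p + p ^ j * u := by
      rw [pow_succ, mul_comm (p ^ j) p, mul_assoc, Nat.add_mul_div_left _ _ hp.out.pos]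
    have hdiv : t / p < p ^ j := by
      apply Nat.div_lt_of_lt_mul
      rw [mul_comm, ← pow_succ]
      exact ht
    rw [pwt_def hne, h1, h2, ih (t / p) u hdiv]
    rcases Nat.eq_zero_or_pos t with h0 | h0
    · simp [h0, pwt_zero]
    · rw [pwt_def h0.ne']
      omega

theorem pwt_pow_mul (i u : ℕ) : pwt p (p ^ i * u) = pwt p u := by
  have := pwt_add_pow_mul (p := p) (j := i) 0 u (Nat.pow_pos hp.out.pos)
  simpa [pwt_zero] using this

theorem pwt_pow (i : ℕ) : pwt p (p ^ i) = 1 := by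
  have := pwt_pow_mul (p := p) i 1
  rwa [mul_one, pwt_lt hp.out.one_lt] at this

theorem pwt_pos {n : ℕ} (hn : n ≠ 0) : 1 ≤ pwt p n := by
  induction n using Nat.strong_induction_on with
  | _ n ih =>
    rw [pwt_def hn]
    rcases Nat.eq_zero_or_pos (n % p) with h | h
    · have hd : n / p ≠ 0 := by
        intro h0
        apply hn
        have hdm := Nat.div_add_mod n p
        rw [h0, Nat.mul_zero] at hdm
        omega
      have hlt : n / p < n := Nat.div_lt_self (Nat.pos_of_ne_zero hn) hp.out.one_lt
      have := ih (n / p) hlt hd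
      omega
    · omega

theorem pwt_pred {m : ℕ} (hm : ¬ p ∣ m) : pwt p (m - 1) = pwt p m - 1 := by
  have hm0 : m ≠ 0 := by rintro rfl; exact hm (dvd_zero p)
  have hr : 1 ≤ m % p := Nat.one_le_iff_ne_zero.mpr fun h => hm (Nat.dvd_of_mod_eq_zero h)
  have hmodlt : m % p < p := Nat.mod_lt m hp.out.pos
  have hdm := Nat.div_add_mod m p
  have hm1 : m - 1 = (m % p - 1) + p ^ 1 * (m / p) := by
    rw [pow_one]
    generalize hA : p * (m / p) = A at hdm ⊢
    omega
  rw [pwt_def hm0, hm1, pwt_add_pow_mul (m % p - 1) (m / p) (by rw [pow_one]; omega),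
    pwt_lt (by omega)]
  omega

theorem pwt_le_of_not_dvd_choose {k e : ℕ} (hk : k ≤ e) (h : ¬ p ∣ e.choose k) :
    pwt p k + pwt p (e - k) ≤ pwt p e := by
  have hv : padicValNat p (e.choose k) = 0 := padicValNat.eq_zero_of_not_dvd h
  have := sub_one_mul_padicValNat_choose_eq_sub_sum_digits (p := p) hk
  rw [hv, Nat.mul_zero] at this
  change 0 = pwt p k + pwt p (e - k) - pwt p e at this
  omega

theorem not_dvd_choose_of_pwt {k e : ℕ} (hk : k ≤ e)
    (h : pwt p k + pwt p (e - k) ≤ pwt p e) : ¬ p ∣ e.choose k := by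
  have hC : e.choose k ≠ 0 := (Nat.choose_pos hk).ne'
  have := sub_one_mul_padicValNat_choose_eq_sub_sum_digits (p := p) hk
  change (p - 1) * padicValNat p (e.choose k) = pwt p k + pwt p (e - k) - pwt p e at this
  have hv : padicValNat p (e.choose k) = 0 := by
    have hp1 : 1 ≤ p - 1 := by have := hp.out.two_le; omega
    nlinarith [this, Nat.sub_eq_zero_of_le h]
  intro hdvd
  have := (padicValNat.eq_zero_iff (p := p) (n := e.choose k)).mp hv
  rcases this with h1 | h1 | h1
  · exact hp.out.one_lt.ne' h1
  · exact hC h1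
  · exact h1 hdvd

theorem pwt_sub_ord_proj {e : ℕ} (he : e ≠ 0) :
    pwt p (e - p ^ (e.factorization p)) = pwt p e - 1 ∧
    ¬ p ∣ e.choose (e - p ^ (e.factorization p)) := by
  set i := e.factorization p with hi
  have hdvd : p ^ i ∣ e := Nat.ordProj_dvd e p
  have hnd : ¬ p ∣ e / p ^ i := Nat.not_dvd_ordCompl hp.out he
  obtain ⟨m, hem⟩ := hdvd
  have hm : e / p ^ i = m := by
    rw [hem]; exact Nat.mul_div_cancel_left m (Nat.pow_pos hp.out.pos)
  rw [hm] at hnd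
  have hm0 : m ≠ 0 := by rintro rfl; simp at hem; exact he hem
  have hsub : e - p ^ i = p ^ i * (m - 1) := by rw [hem, Nat.mul_sub]; omega
  have h1 : pwt p (e - p ^ i) = pwt p e - 1 := by
    rw [hsub, pwt_pow_mul, pwt_pred hnd, hem, pwt_pow_mul]
  refine ⟨h1, ?_⟩
  have hple : p ^ i ≤ e := by
    rw [hem]; exact Nat.le_mul_of_pos_right _ (Nat.pos_of_ne_zero hm0)
  apply not_dvd_choose_of_pwt (by omega)
  have h2 : e - (e - p ^ i) = p ^ i := by omega
  rw [h2, h1, pwt_pow]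
  have : 1 ≤ pwt p e := by
    rw [hem, pwt_pow_mul]; exact pwt_pos hm0
  omega

end Pwt

section PolyChar
open Polynomial
variable {p : ℕ} [hp : Fact p.Prime] {K : Type*} [Field K] [CharP K p]

theorem degLE_pow (e : ℕ) : degLE (fun x : K => x ^ e) (pwt p e) := by
  induction e using Nat.strong_induction_on with
  | _ e ih =>
    rcases Nat.eq_zero_or_pos e with rfl | he
    · rw [pwt_zero]
      intro γ x
      simp
    obtain ⟨d, hd⟩ : ∃ d, pwt p e = d + 1 :=
      ⟨pwt p e - 1, by have := pwt_pos (p := p) he.ne'; omega⟩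
    rw [hd]
    intro γ
    have hexp : ∀ x : K, (x + γ) ^ e - x ^ e
        = ∑ k ∈ Finset.range e, x ^ k * γ ^ (e - k) * (e.choose k : K) := by
      intro x
      rw [add_pow, Finset.sum_range_succ, Nat.sub_self, pow_zero, Nat.choose_self, Nat.cast_one,
        mul_one, mul_one, add_sub_cancel_right]
    refine degLE_congr (fun x => (hexp x).symm) (degLE_sum _ _ ?_)
    intro k hk
    have hk' : k < e := Finset.mem_range.mp hk
    rcases eq_or_ne ((e.choose k : K)) 0 with hck | hck
    · exact degLE_congr (fun x => by rw [hck, mul_zero]) (degLE_zero_fun d)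
    · have hnd : ¬ p ∣ e.choose k := fun hdvd => hck ((CharP.cast_eq_zero_iff K p _).mpr hdvd)
      have hle := pwt_le_of_not_dvd_choose (p := p) hk'.le hnd
      have hek : 1 ≤ pwt p (e - k) := pwt_pos (by omega)
      have hkd : pwt p k ≤ d := by omega
      have h1 : degLE (fun x : K => x ^ k * (γ ^ (e - k) * (e.choose k : K))) d :=
        degLE_postcomp (AddMonoidHom.mulRight _) d (degLE_mono hkd (ih k hk'))
      exact degLE_congr (fun x => by rw [← mul_assoc]) h1

theorem degLE_eval_of_pwt {P : K[X]} {d : ℕ} (h : ∀ e ∈ P.support, pwt p e ≤ d) :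
    degLE (fun x => P.eval x) d := by
  have hrep : ∀ x : K, P.eval x = ∑ e ∈ P.support, P.coeff e * x ^ e := fun x => by
    rw [Polynomial.eval_eq_sum, Polynomial.sum_def]
  refine degLE_congr (fun x => (hrep x).symm) (degLE_sum _ _ ?_)
  intro e he
  exact degLE_postcomp (AddMonoidHom.mulLeft (P.coeff e)) d (degLE_mono (h e he) (degLE_pow e))

/-- The polynomial (in `γ`) giving the `k`-th coefficient of `P(X+γ) - P(X)`. -/
noncomputable def gpoly (P : K[X]) (k : ℕ) : K[X] :=
  ∑ e ∈ P.support.filter (fun e => k < e), C (P.coeff e * (e.choose k : K)) * X ^ (e - k)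

theorem gpoly_coeff_at {P : K[X]} {e k : ℕ} (he : e ∈ P.support) (hk : k < e) :
    (gpoly P k).coeff (e - k) = P.coeff e * (e.choose k : K) := by
  unfold gpoly
  rw [Polynomial.finset_sum_coeff, Finset.sum_eq_single e]
  · rw [coeff_C_mul, coeff_X_pow, if_pos rfl, mul_one]
  · intro e' he' hne
    have h1 : k < e' := (Finset.mem_filter.mp he').2
    rw [coeff_C_mul, coeff_X_pow, if_neg (by omega), mul_zero]
  · intro habs
    exact absurd (Finset.mem_filter.mpr ⟨he, hk⟩) habs

theorem coeff_comp_sub (P : K[X]) (k : ℕ) (γ : K) :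
    (P.comp (X + C γ) - P).coeff k = (gpoly P k).eval γ := by
  have hcomp : (P.comp (X + C γ)).coeff k
      = ∑ e ∈ P.support, P.coeff e * (γ ^ (e - k) * (e.choose k : K)) := by
    rw [comp_eq_sum_left, Polynomial.sum_def, Polynomial.finset_sum_coeff]
    refine Finset.sum_congr rfl fun e _ => ?_
    rw [coeff_C_mul, coeff_X_add_C_pow]
  have heval : (gpoly P k).eval γ
      = ∑ e ∈ P.support.filter (fun e => k < e), P.coeff e * (γ ^ (e - k) * (e.choose k : K)) := by
    unfold gpoly
    rw [Polynomial.eval_finset_sum]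
    refine Finset.sum_congr rfl fun e _ => ?_
    rw [eval_mul, eval_C, eval_pow, eval_X]
    ring
  rw [Polynomial.coeff_sub, hcomp, heval]
  rw [← Finset.sum_filter_add_sum_filter_not P.support (fun e => k < e)
    (fun e => P.coeff e * (γ ^ (e - k) * (e.choose k : K)))]
  have h2 : ∑ e ∈ P.support.filter (fun e => ¬ k < e),
      P.coeff e * (γ ^ (e - k) * (e.choose k : K)) = P.coeff k := by
    rw [Finset.sum_eq_single k]
    · rw [Nat.sub_self, pow_zero, Nat.choose_self, Nat.cast_one]; ring
    · intro e' he' hne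
      have h3 : ¬ k < e' := (Finset.mem_filter.mp he').2
      have h4 : e' < k := by omega
      rw [Nat.choose_eq_zero_of_lt h4, Nat.cast_zero, mul_zero, mul_zero]
    · intro hk
      have : P.coeff k = 0 := by
        by_contra h
        exact hk (Finset.mem_filter.mpr ⟨Polynomial.mem_support_iff.mpr h, lt_irrefl k⟩)
      rw [this, zero_mul]
  rw [h2]
  ring

variable [Fintype K]

theorem exists_interp (f : K → K) :
    ∃ P : K[X], P.natDegree < Fintype.card K ∧ ∀ x, P.eval x = f x := by
  classical
  refine ⟨Lagrange.interpolate Finset.univ id f, ?_, fun x =>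
    Lagrange.eval_interpolate_at_node f (Set.injOn_id _) (Finset.mem_univ x)⟩
  have hd := Lagrange.degree_interpolate_lt (s := Finset.univ) f (Set.injOn_id _)
  rcases eq_or_ne (Lagrange.interpolate Finset.univ id f) 0 with h0 | h0
  · rw [h0, Polynomial.natDegree_zero]
    rw [← Finset.card_univ]
    exact Finset.card_pos.mpr ⟨(0 : K), Finset.mem_univ 0⟩
  · rw [← Finset.card_univ]
    exact (Polynomial.natDegree_lt_iff_degree_lt h0).mpr hd

theorem eq_zero_of_eval_zero' {Q : K[X]} (hdeg : Q.natDegree < Fintype.card K)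
    (h : ∀ x, Q.eval x = 0) : Q = 0 := by
  classical
  refine Polynomial.eq_zero_of_natDegree_lt_card_of_eval_eq_zero' Q Finset.univ
    (fun i _ => h i) ?_
  rwa [Finset.card_univ]

theorem exists_eval_ne {Q : K[X]} (hdeg : Q.natDegree < Fintype.card K) (h : Q ≠ 0) :
    ∃ γ, Q.eval γ ≠ 0 := by
  by_contra hall
  push_neg at hall
  exact h (eq_zero_of_eval_zero' hdeg hall)

theorem pwt_le_of_degLE : ∀ (d : ℕ) (P : K[X]), P.natDegree < Fintype.card K →
    degLE (fun x => P.eval x) d → ∀ e ∈ P.support, pwt p e ≤ d := by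
  intro d
  induction d with
  | zero =>
    intro P hdeg hP e he
    have hconst : ∀ x, P.eval x = P.eval 0 := by
      intro x
      have := hP x 0
      simp only [zero_add] at this
      exact sub_eq_zero.mp this
    have hQ : P - C (P.eval 0) = 0 := by
      apply eq_zero_of_eval_zero'
      · exact lt_of_le_of_lt (le_trans (Polynomial.natDegree_sub_le _ _)
          (by simp [Polynomial.natDegree_C])) hdeg
      · intro x
        rw [Polynomial.eval_sub, Polynomial.eval_C, hconst x, sub_self]
    have hPC : P = C (P.eval 0) := by
      have := sub_eq_zero.mp hQ
      exact this
    rw [hPC] at he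
    have h0 : e = 0 := Finset.mem_singleton.mp (Polynomial.support_C_subset _ he)
    rw [h0, pwt_zero]
  | succ d ih =>
    intro P hdeg hP e he
    by_contra hgt
    push_neg at hgt
    have hSe : d + 2 ≤ pwt p e := hgt
    have he0 : e ≠ 0 := by
      rintro rfl
      rw [pwt_zero] at hSe
      omega
    set i := e.factorization p with hi
    obtain ⟨hwk, hnd⟩ := pwt_sub_ord_proj (p := p) he0
    set k := e - p ^ i with hk
    have hpi_le : p ^ i ≤ e := Nat.ordProj_le p he0
    have hpi_pos : 0 < p ^ i := Nat.pow_pos hp.out.pos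
    have hklt : k < e := by omega
    -- the coefficient polynomial is nonzero
    have hgne : gpoly P k ≠ 0 := by
      intro h0
      have := gpoly_coeff_at he hklt
      rw [h0] at this
      simp only [Polynomial.coeff_zero] at this
      have hae : P.coeff e ≠ 0 := Polynomial.mem_support_iff.mp he
      have hCne : ((e.choose k : K)) ≠ 0 := by
        intro hC
        have : p ∣ e.choose k := (CharP.cast_eq_zero_iff K p _).mp hC
        exact hnd this
      exact hCne (by
        field_simp at this
        exact (mul_eq_zero.mp this.symm).resolve_left hae)
    have hgdeg : (gpoly P k).natDegree < Fintype.card K := by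
      apply lt_of_le_of_lt _ hdeg
      apply Polynomial.natDegree_sum_le_of_forall_le
      intro e' he'
      refine le_trans (Polynomial.natDegree_C_mul_X_pow_le _ _) ?_
      have := (Finset.mem_filter.mp he').1
      have := Polynomial.le_natDegree_of_mem_supp _ this
      omega
    obtain ⟨γ, hγ⟩ := exists_eval_ne hgdeg hgne
    -- k lies in the support of the derivative polynomial
    set Pγ := P.comp (X + C γ) - P with hPγ
    have hkP : k ∈ Pγ.support := by
      rw [Polynomial.mem_support_iff, hPγ, coeff_comp_sub]
      exact hγ
    have hPγdeg : Pγ.natDegree < Fintype.card K := by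
      apply lt_of_le_of_lt _ hdeg
      refine le_trans (Polynomial.natDegree_sub_le _ _) ?_
      have h1 : (P.comp (X + C γ)).natDegree ≤ P.natDegree := by
        rw [Polynomial.natDegree_comp, Polynomial.natDegree_X_add_C, mul_one]
      omega
    have hPγLE : degLE (fun x => Pγ.eval x) d := by
      refine degLE_congr (fun x => ?_) (hP γ)
      rw [hPγ, Polynomial.eval_sub, Polynomial.eval_comp, Polynomial.eval_add,
        Polynomial.eval_X, Polynomial.eval_C]
    have := ih Pγ hPγdeg hPγLE k hkP
    omega

end PolyChar

section Shift
variable {p : ℕ} [hp : Fact p.Prime]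

/-- Multiply an exponent by `p` modulo `p^m - 1`, staying in `[1, p^m - 1]`. -/
def shiftFun (p m e : ℕ) : ℕ := (e % p ^ (m - 1)) * p + e / p ^ (m - 1)

theorem shiftFun_spec {m e : ℕ} (hm : 1 ≤ m) (he1 : 1 ≤ e) (he2 : e ≤ p ^ m - 1) :
    1 ≤ shiftFun p m e ∧ shiftFun p m e ≤ p ^ m - 1 ∧ pwt p (shiftFun p m e) = pwt p e ∧
    e * p = shiftFun p m e + (e / p ^ (m - 1)) * (p ^ m - 1) := by
  have hp2 : 2 ≤ p := hp.out.two_le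
  set A := p ^ (m - 1) with hA
  set t := e % A with ht
  set r := e / A with hr
  have hA1 : 1 ≤ A := Nat.one_le_pow _ _ (by omega)
  have hAB : A * p = p ^ m := by
    rw [hA, ← pow_succ]
    congr 1
    omega
  have hB1 : 1 ≤ p ^ m := Nat.one_le_pow _ _ (by omega)
  have hmod : t + A * r = e := Nat.mod_add_div e A
  have htA : t < A := Nat.mod_lt e (by omega)
  have hrp : r < p := by
    rw [hr]
    apply Nat.div_lt_of_lt_mul
    rw [hAB]
    omega
  have hsf : shiftFun p m e = t * p + r := rfl
  obtain ⟨B', hB'⟩ : ∃ B', p ^ m = B' + 1 := ⟨p ^ m - 1, by omega⟩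
  obtain ⟨A', hA'⟩ : ∃ A', A = A' + 1 := ⟨A - 1, by omega⟩
  refine ⟨?_, ?_, ?_, ?_⟩
  · rcases Nat.eq_zero_or_pos r with hr0 | hr0
    · have hAr : A * r = 0 := by rw [hr0, Nat.mul_zero]
      have htp : t ≤ t * p := Nat.le_mul_of_pos_right t (by omega)
      omega
    · omega
  · have hmul : t * p ≤ A' * p := Nat.mul_le_mul_right p (by omega)
    have h3 : p ^ m = A' * p + p := by rw [← hAB, hA']; ring
    omega
  · have h1 : pwt p (t * p + r) = pwt p r + pwt p t := by
      have heq : t * p + r = r + p ^ 1 * t := by ring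
      rw [heq, pwt_add_pow_mul r t (by rwa [pow_one])]
    have h2 : pwt p e = pwt p t + pwt p r := by
      rw [← hmod, pwt_add_pow_mul t r htA]
    rw [hsf, h1, h2, pwt_lt hrp]
    have h4 : pwt p t + r = r + pwt p t := by omega
    omega
  · have h1 : e * p = t * p + r * (A * p) := by rw [← hmod]; ring
    rw [hAB, hB'] at h1
    have h2 : r * (B' + 1) = r * B' + r := by ring
    rw [hB', hsf]
    have h5 : r * (B' + 1 - 1) = r * B' := by simp
    omega

theorem shiftIter_spec {m e : ℕ} (hm : 1 ≤ m) (he1 : 1 ≤ e) (he2 : e ≤ p ^ m - 1) (i : ℕ) :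
    1 ≤ (shiftFun p m)^[i] e ∧ (shiftFun p m)^[i] e ≤ p ^ m - 1 ∧
    pwt p ((shiftFun p m)^[i] e) = pwt p e ∧
    ∃ t, e * p ^ i = (shiftFun p m)^[i] e + t * (p ^ m - 1) := by
  induction i with
  | zero => exact ⟨he1, he2, rfl, 0, by simp⟩
  | succ i ih =>
    obtain ⟨h1, h2, h3, t, ht⟩ := ih
    obtain ⟨g1, g2, g3, g4⟩ := shiftFun_spec hm h1 h2
    rw [Function.iterate_succ_apply']
    refine ⟨g1, g2, by rw [g3, h3], ?_⟩
    refine ⟨e.div (p^(m-1)) * 0 + ((shiftFun p m)^[i] e / p ^ (m - 1)) + t * p, ?_⟩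
    have : e * p ^ (i + 1) = (e * p ^ i) * p := by ring
    rw [this, ht]
    rw [add_mul, g4]
    ring

end Shift

section PowerComponent
variable {p : ℕ} [hp : Fact p.Prime] {K : Type*} [Field K] [CharP K p] [Fintype K]
open Polynomial

theorem pow_eq_reduce {e e' t : ℕ} (he' : 1 ≤ e') (heq : e = e' + t * (Fintype.card K - 1))
    (x : K) : x ^ e = x ^ e' := by
  rcases eq_or_ne x 0 with rfl | hx
  · rw [zero_pow (by omega), zero_pow (by omega)]
  · rw [heq, pow_add, pow_mul']
    rw [FiniteField.pow_card_sub_one_eq_one x hx, one_pow, mul_one]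

theorem support_pow_of_additive {P : K[X]} (hdeg : P.natDegree < Fintype.card K)
    (hadd : ∀ x y : K, P.eval (x + y) = P.eval x + P.eval y) :
    ∀ e ∈ P.support, ∃ i, e = p ^ i := by
  have h0 : P.eval 0 = 0 := by
    have := hadd 0 0
    rw [add_zero] at this
    exact (left_eq_add.mp this)
  intro e he
  have he0 : e ≠ 0 := by
    intro h
    rw [h] at he
    have := Polynomial.mem_support_iff.mp he
    rw [Polynomial.coeff_zero_eq_eval_zero, h0] at this
    exact this rfl
  -- gpoly P k vanishes identically for each k ≥ 1
  have hg : ∀ k, 1 ≤ k → gpoly P k = 0 := by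
    intro k hk
    have hgdeg : (gpoly P k).natDegree < Fintype.card K := by
      apply lt_of_le_of_lt _ hdeg
      apply Polynomial.natDegree_sum_le_of_forall_le
      intro e' he'
      refine le_trans (Polynomial.natDegree_C_mul_X_pow_le _ _) ?_
      have h1 := (Finset.mem_filter.mp he').1
      have h2 := Polynomial.le_natDegree_of_mem_supp _ h1
      omega
    apply eq_zero_of_eval_zero' hgdeg
    intro γ
    rw [← coeff_comp_sub]
    have hzero : P.comp (X + C γ) - P - C (P.eval γ) = 0 := by
      apply eq_zero_of_eval_zero'
      · apply lt_of_le_of_lt _ hdeg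
        refine le_trans (Polynomial.natDegree_sub_le _ _) ?_
        refine max_le (le_trans (Polynomial.natDegree_sub_le _ _) ?_) (by simp)
        refine max_le ?_ le_rfl
        rw [Polynomial.natDegree_comp, Polynomial.natDegree_X_add_C, mul_one]
      · intro x
        rw [Polynomial.eval_sub, Polynomial.eval_sub, Polynomial.eval_comp,
          Polynomial.eval_add, Polynomial.eval_X, Polynomial.eval_C, Polynomial.eval_C]
        rw [add_comm x γ] at *
        rw [hadd γ x]
        ring
    have := congrArg (fun Q => Polynomial.coeff Q k) hzero
    simp only [Polynomial.coeff_sub, Polynomial.coeff_zero] at this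
    rw [Polynomial.coeff_C, if_neg (by omega), sub_zero] at this
    rw [Polynomial.coeff_sub]
    exact this
  -- now show e is a power of p
  by_contra hne
  push_neg at hne
  set i := e.factorization p with hi
  have hpi_le : p ^ i ≤ e := Nat.ordProj_le p he0
  have hpi_lt : p ^ i < e := lt_of_le_of_ne hpi_le (Ne.symm (hne i))
  have hpi_pos : 1 ≤ p ^ i := Nat.one_le_pow _ _ hp.out.pos
  have hcoeff := gpoly_coeff_at he hpi_lt
  rw [hg (p ^ i) hpi_pos] at hcoeff
  simp only [Polynomial.coeff_zero] at hcoeff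
  have hae : P.coeff e ≠ 0 := Polynomial.mem_support_iff.mp he
  have hCzero : ((e.choose (p ^ i) : K)) = 0 := by
    rcases mul_eq_zero.mp hcoeff.symm with h | h
    · exact absurd h hae
    · exact h
  have hdvd : p ∣ e.choose (p ^ i) := (CharP.cast_eq_zero_iff K p _).mp hCzero
  obtain ⟨_, hnd⟩ := pwt_sub_ord_proj (p := p) he0
  rw [← hi] at hnd
  rw [← Nat.choose_symm hpi_le] at hdvd
  exact hnd hdvd

theorem power_component {s : ℕ} (hs : 1 ≤ s) (ψ : K → K)
    (hadd : ∀ x y : K, ψ (x + y) = ψ x + ψ y) :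
    degLE (fun y : K => ψ (y ^ s)) (pwt p ((s - 1) % (Fintype.card K - 1) + 1)) ∧
    (degLE (fun y : K => ψ (y ^ s)) (pwt p ((s - 1) % (Fintype.card K - 1) + 1) - 1) →
      ∀ y : K, ψ (y ^ s) = 0) := by
  obtain ⟨m', hpp, hcard⟩ := FiniteField.card K p
  set q := Fintype.card K with hqdef
  have hm : 1 ≤ (m' : ℕ) := m'.pos
  set m := (m' : ℕ) with hmdef
  have hq : q = p ^ m := hcard
  have hq2 : 2 ≤ q := by
    rw [hq]
    calc 2 ≤ p := hp.out.two_le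
    _ = p ^ 1 := (pow_one p).symm
    _ ≤ p ^ m := Nat.pow_le_pow_right hp.out.pos hm
  set s₀ := (s - 1) % (q - 1) + 1 with hs₀def
  set w := pwt p s₀ with hwdef
  have hs₀1 : 1 ≤ s₀ := by omega
  have hs₀2 : s₀ ≤ q - 1 := by
    have := Nat.mod_lt (s - 1) (y := q - 1) (by omega)
    omega
  have hw1 : 1 ≤ w := pwt_pos (by omega)
  obtain ⟨k, hk⟩ : ∃ k, s = s₀ + k * (q - 1) := by
    refine ⟨(s - 1) / (q - 1), ?_⟩
    have h1 := Nat.div_add_mod (s - 1) (q - 1)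
    rw [mul_comm ((s-1)/(q-1)) (q-1)]
    generalize hA : (q - 1) * ((s - 1) / (q - 1)) = A at h1 ⊢
    omega
  obtain ⟨P, hPdeg, hPeval⟩ := exists_interp ψ
  have haddP : ∀ x y : K, P.eval (x + y) = P.eval x + P.eval y := by
    intro x y
    rw [hPeval, hPeval, hPeval]
    exact hadd x y
  have hsupp := support_pow_of_additive (p := p) hPdeg haddP
  set E : ℕ → ℕ := fun e => (shiftFun p m)^[Nat.log p e] s₀ with hE
  have hs₀2' : s₀ ≤ p ^ m - 1 := by rw [← hq]; exact hs₀2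
  have hiter := fun i => shiftIter_spec (p := p) hm hs₀1 hs₀2' i
  set H : Polynomial K := ∑ e ∈ P.support, Polynomial.C (P.coeff e) * Polynomial.X ^ (E e)
    with hH
  have hterm : ∀ e ∈ P.support, ∀ y : K, (y ^ s) ^ e = y ^ (E e) := by
    intro e he y
    obtain ⟨i, rfl⟩ := hsupp e he
    have hlog : Nat.log p (p ^ i) = i := Nat.log_pow hp.out.one_lt i
    obtain ⟨h1, h2, h3, t, ht⟩ := hiter i
    rw [hE]
    simp only [hlog]
    rw [← pow_mul]
    refine pow_eq_reduce (t := t + k * p ^ i) h1 ?_ y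
    have hq1 : Fintype.card K - 1 = p ^ m - 1 := by rw [← hqdef, hq]
    rw [hq1, hk, add_mul, ht, hq]
    ring
  have heval : ∀ y : K, H.eval y = ψ (y ^ s) := by
    intro y
    rw [← hPeval (y ^ s), hH, Polynomial.eval_finset_sum, Polynomial.eval_eq_sum,
      Polynomial.sum_def]
    refine Finset.sum_congr rfl fun e he => ?_
    rw [Polynomial.eval_mul, Polynomial.eval_C, Polynomial.eval_pow, Polynomial.eval_X,
      ← hterm e he y]
  have hHdeg : H.natDegree < q := by
    have hle : H.natDegree ≤ q - 1 := by
      rw [hH]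
      apply Polynomial.natDegree_sum_le_of_forall_le
      intro e he
      refine le_trans (Polynomial.natDegree_C_mul_X_pow_le _ _) ?_
      obtain ⟨i, rfl⟩ := hsupp e he
      have hlog : Nat.log p (p ^ i) = i := Nat.log_pow hp.out.one_lt i
      obtain ⟨h1, h2, h3, t, ht⟩ := hiter i
      rw [hE]
      simp only [hlog]
      rw [← hq] at h2
      exact h2
    omega
  have hHw : ∀ e'' ∈ H.support, pwt p e'' = w := by
    intro e'' he''
    have hc := Polynomial.mem_support_iff.mp he''
    rw [hH, Polynomial.finset_sum_coeff] at hc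
    obtain ⟨e, he, hne⟩ := Finset.exists_ne_zero_of_sum_ne_zero hc
    rw [Polynomial.coeff_C_mul, Polynomial.coeff_X_pow] at hne
    have hEe : E e = e'' := by
      by_contra hEne
      rw [if_neg (fun h => hEne h.symm), mul_zero] at hne
      exact hne rfl
    obtain ⟨i, rfl⟩ := hsupp e he
    have hlog : Nat.log p (p ^ i) = i := Nat.log_pow hp.out.one_lt i
    obtain ⟨h1, h2, h3, t, ht⟩ := hiter i
    rw [← hEe, hE]
    simp only [hlog]
    exact h3
  constructor
  · exact degLE_congr (fun y => heval y) (degLE_eval_of_pwt fun e he => (hHw e he).le)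
  · intro hlow y
    have hlowH : degLE (fun x => H.eval x) (w - 1) :=
      degLE_congr (fun x => (heval x).symm) hlow
    have hH0 : H = 0 := by
      by_contra hH0
      obtain ⟨e'', he''⟩ := Polynomial.nonempty_support_iff.mpr hH0
      have := pwt_le_of_degLE (p := p) (w - 1) H hHdeg hlowH e'' he''
      rw [hHw e'' he''] at this
      omega
    rw [← heval y, hH0, Polynomial.eval_zero]

end PowerComponent

section Helpers
variable {V V' W W' : Type*} [AddCommGroup V] [AddCommGroup V'] [AddCommGroup W] [AddCommGroup W']

theorem degLE_precomp_affine (A : V' → V) (φ : V' →+ V) (b : V) (hA : ∀ x, A x = φ x + b)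
    {d : ℕ} {f : V → W} (hf : degLE f d) : degLE (fun x => f (A x)) d :=
  degLE_congr (fun x => by rw [hA x]) (degLE_precomp φ b d hf)

theorem degLE_postcomp_fun (φ : W → W') (hφ : ∀ a b, φ (a + b) = φ a + φ b)
    {d : ℕ} {f : V → W} (hf : degLE f d) : degLE (fun x => φ (f x)) d :=
  degLE_postcomp (AddMonoidHom.mk' φ hφ) d hf

theorem degLE_of_postcomp_fun (φ : W → W') (hφ : ∀ a b, φ (a + b) = φ a + φ b)
    (hinj : Function.Injective φ) {d : ℕ} {f : V → W}
    (hf : degLE (fun x => φ (f x)) d) : degLE f d :=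
  degLE_of_postcomp (AddMonoidHom.mk' φ hφ) hinj d hf

theorem degLE_one_affine_fun (A : V → W) (φ : V →+ W) (b : W) (hA : ∀ x, A x = φ x + b) :
    degLE A 1 :=
  degLE_congr (fun x => (hA x).symm) (degLE_one_affine φ b)

end Helpers

/-- An `F_p`-affine map. -/
def IsAffineMap (R : Type*) {V W : Type*} [CommSemiring R] [AddCommGroup V] [AddCommGroup W]
    [Module R V] [Module R W] (A : V → W) : Prop :=
  ∃ (L : V →ₗ[R] W) (c : W), ∀ x, A x = L x + c

/-- EA-equivalence of `(n,n)`-functions: `F' = A₁ ∘ F ∘ A₂ + A₃` with `A₁, A₂`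
affine permutations and `A₃` affine. -/
def EAequiv (p n : ℕ) [Fact p.Prime]
    (F F' : GaloisField p n → GaloisField p n) : Prop :=
  ∃ A₁ A₂ A₃ : GaloisField p n → GaloisField p n,
    IsAffineMap (ZMod p) A₁ ∧ Function.Bijective A₁ ∧
    IsAffineMap (ZMod p) A₂ ∧ Function.Bijective A₂ ∧
    IsAffineMap (ZMod p) A₃ ∧
    ∀ x, F' x = A₁ (F (A₂ x)) + A₃ x

/-- If some component function `Tr(cF)` has algebraic degree other than `0`, `1`, or
`d°(F)`, then `F` is EA-inequivalent to every power function. -/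
theorem component_degree_obstruction
    (p n : ℕ) [Fact p.Prime]
    (F : GaloisField p n → GaloisField p n)
    (hc : ∃ c : GaloisField p n, c ≠ 0 ∧
      algDeg (fun x => Algebra.trace (ZMod p) (GaloisField p n) (c * F x)) ≠ 0 ∧
      algDeg (fun x => Algebra.trace (ZMod p) (GaloisField p n) (c * F x)) ≠ 1 ∧
      algDeg (fun x => Algebra.trace (ZMod p) (GaloisField p n) (c * F x)) ≠ algDeg F) :
    ∀ s : ℕ, ¬ EAequiv p n F (fun x => x ^ s) := by
  classical
  intro s hEA
  obtain ⟨c, hc0, hD0, hD1, hDF⟩ := hc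
  letI : Fintype (GaloisField p n) := Fintype.ofFinite _
  obtain ⟨A₁, A₂, A₃, ⟨L₁, b₁, hA₁⟩, hA₁bij, ⟨L₂, b₂, hA₂⟩, hA₂bij, ⟨L₃, b₃, hA₃⟩, hEq⟩ := hEA
  set fc := fun x => Algebra.trace (ZMod p) (GaloisField p n) (c * F x) with hfc
  set D := algDeg fc with hDdef
  -- basic facts about D
  have hSne : {d | degLE fc d}.Nonempty := by
    by_contra h
    rw [Set.not_nonempty_iff_eq_empty] at h
    apply hD0
    show algDeg fc = 0
    unfold algDeg
    rw [h, Nat.sInf_empty]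
  have hDmem : degLE fc D := Nat.sInf_mem hSne
  have hD2 : 2 ≤ D := by
    have h0 : D ≠ 0 := hD0
    have h1 : D ≠ 1 := hD1
    omega
  -- linear parts are bijective
  have hL₁bij : Function.Bijective (L₁ : GaloisField p n → GaloisField p n) := by
    have hgb : Function.Bijective (fun y : GaloisField p n => y - b₁) :=
      ⟨fun a b h => by simpa using congrArg (fun z => z + b₁) h,
       fun y => ⟨y + b₁, by simp⟩⟩
    have hco : (fun y : GaloisField p n => y - b₁) ∘ A₁ = fun x => L₁ x :=
      funext fun x => by simp [hA₁ x]
    have := hgb.comp hA₁bij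
    rwa [hco] at this
  have hL₂bij : Function.Bijective (L₂ : GaloisField p n → GaloisField p n) := by
    have hgb : Function.Bijective (fun y : GaloisField p n => y - b₂) :=
      ⟨fun a b h => by simpa using congrArg (fun z => z + b₂) h,
       fun y => ⟨y + b₂, by simp⟩⟩
    have hco : (fun y : GaloisField p n => y - b₂) ∘ A₂ = fun x => L₂ x :=
      funext fun x => by simp [hA₂ x]
    have := hgb.comp hA₂bij
    rwa [hco] at this
  set E₁ := LinearEquiv.ofBijective L₁ hL₁bij with hE₁
  set E₂ := LinearEquiv.ofBijective L₂ hL₂bij with hE₂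
  set M : GaloisField p n → GaloisField p n := fun z => E₁.symm z with hM
  set B : GaloisField p n → GaloisField p n := fun y => E₂.symm (y - b₂) with hB
  have hMadd : ∀ a b : GaloisField p n, M (a + b) = M a + M b := fun a b => by
    simp [hM, map_add]
  have hML₁ : ∀ z, M (L₁ z) = z := fun z => E₁.symm_apply_apply z
  have hBA₂ : ∀ y, A₂ (B y) = y := by
    intro y
    rw [hA₂, hB]
    have : L₂ (E₂.symm (y - b₂)) = y - b₂ := E₂.apply_symm_apply (y - b₂)
    rw [this]
    ring
  have hA₂B : ∀ x, B (A₂ x) = x := fun x => hA₂bij.injective (by rw [hBA₂ (A₂ x)])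
  -- affine form of B
  set ψB : GaloisField p n →+ GaloisField p n := E₂.symm.toLinearMap.toAddMonoidHom with hψB
  have hBaff : ∀ y, B y = ψB y + (- E₂.symm b₂) := by
    intro y
    show E₂.symm (y - b₂) = E₂.symm y + - E₂.symm b₂
    rw [map_sub]
    ring
  -- key identity for F
  have hFy : ∀ y, F y = M ((B y) ^ s) - M (A₃ (B y)) - M b₁ := by
    intro y
    have h1 : (B y) ^ s = A₁ (F (A₂ (B y))) + A₃ (B y) := hEq (B y)
    rw [hA₁] at h1
    have h2 : L₁ (F (A₂ (B y))) = (B y) ^ s - A₃ (B y) - b₁ := by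
      rw [h1]; ring
    have h3 : F (A₂ (B y)) = M ((B y) ^ s - A₃ (B y) - b₁) := by
      rw [← h2, hML₁]
    rw [hBA₂ y] at h3
    rw [h3]
    show E₁.symm _ = E₁.symm _ - E₁.symm _ - E₁.symm _
    rw [map_sub, map_sub]
  -- the component functional
  set φ : GaloisField p n → ZMod p :=
    fun z => Algebra.trace (ZMod p) (GaloisField p n) (c * M z) with hφ
  have hφadd : ∀ a b : GaloisField p n, φ (a + b) = φ a + φ b := by
    intro a b
    show Algebra.trace (ZMod p) (GaloisField p n) (c * M (a + b)) = _
    rw [hMadd, mul_add, map_add]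
  set g : GaloisField p n → ZMod p := fun y => φ (y ^ s) with hg
  set aff : GaloisField p n → ZMod p := fun y => φ (A₃ (B y)) + φ b₁ with haffdef
  have haff : degLE aff 1 := by
    set Φ : GaloisField p n →+ ZMod p := AddMonoidHom.mk' φ hφadd with hΦ
    refine degLE_one_affine_fun aff (Φ.comp (L₃.toAddMonoidHom.comp ψB))
      (φ (L₃ (- E₂.symm b₂) + b₃) + φ b₁) ?_
    intro y
    show φ (A₃ (B y)) + φ b₁ = φ (L₃ (ψB y)) + (φ (L₃ (- E₂.symm b₂) + b₃) + φ b₁)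
    rw [hA₃, hBaff y, map_add L₃, add_assoc, hφadd]
    ring
  have hfc_eq : ∀ y, fc y = g (B y) - aff y := by
    intro y
    show Algebra.trace (ZMod p) (GaloisField p n) (c * F y) = φ ((B y) ^ s) - (φ (A₃ (B y)) + φ b₁)
    rw [hFy y]
    have : c * (M ((B y) ^ s) - M (A₃ (B y)) - M b₁)
        = c * M ((B y) ^ s) - c * M (A₃ (B y)) - c * M b₁ := by ring
    rw [this, map_sub, map_sub]
    show φ _ - φ _ - φ _ = _
    ring
  -- rule out s = 0
  rcases Nat.eq_zero_or_pos s with rfl | hs1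
  · have hfc1 : degLE fc 1 := by
      refine degLE_congr (fun y => (hfc_eq y).symm) ?_
      refine degLE_sub ?_ haff
      exact degLE_congr (fun y => by rw [hg]; norm_num) (degLE_const (φ 1))
    have : D ≤ 1 := Nat.sInf_le hfc1
    omega
  -- transfer between fc and g
  have hgB_of_g : ∀ d : ℕ, degLE g d → degLE (fun y => g (B y)) d := fun d hd =>
    degLE_precomp_affine B ψB (- E₂.symm b₂) hBaff hd
  have hg_of_gB : ∀ d : ℕ, degLE (fun y => g (B y)) d → degLE g d := by
    intro d hd
    have := degLE_precomp_affine A₂ L₂.toAddMonoidHom b₂ (fun x => hA₂ x) hd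
    exact degLE_congr (fun x => by rw [hA₂B x]) this
  have hDg : degLE g D := by
    apply hg_of_gB
    refine degLE_congr (fun y => ?_) (degLE_add D hDmem (degLE_mono (by omega) haff))
    rw [hfc_eq y]
    ring
  -- apply the power-component machinery
  set w := pwt p ((s - 1) % (Fintype.card (GaloisField p n) - 1) + 1) with hw
  have hw1 : 1 ≤ w := pwt_pos (by omega)
  have hχadd : ∀ a b : ZMod p, algebraMap (ZMod p) (GaloisField p n) (a + b)
      = algebraMap (ZMod p) (GaloisField p n) a + algebraMap (ZMod p) (GaloisField p n) b :=
    fun a b => map_add _ a b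
  have hχinj : Function.Injective (algebraMap (ZMod p) (GaloisField p n)) :=
    RingHom.injective _
  set ψK : GaloisField p n → GaloisField p n :=
    fun z => algebraMap (ZMod p) (GaloisField p n) (φ z) with hψK
  have hψKadd : ∀ a b : GaloisField p n, ψK (a + b) = ψK a + ψK b := by
    intro a b
    show algebraMap (ZMod p) (GaloisField p n) (φ (a + b)) = _
    rw [hφadd, map_add]
  obtain ⟨hup, hlow⟩ := power_component (p := p) hs1 ψK hψKadd
  -- D = w
  have hDw : D = w := by
    have hge : w ≤ D := by
      by_contra hlt
      push_neg at hlt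
      have h1 : degLE (fun y => ψK (y ^ s)) (w - 1) :=
        degLE_mono (show D ≤ w - 1 by omega) (degLE_postcomp_fun _ hχadd hDg)
      have h2 := hlow h1
      have hg0 : ∀ y, g y = 0 := by
        intro y
        apply hχinj
        rw [map_zero]
        exact h2 y
      have hfc1 : degLE fc 1 := by
        refine degLE_congr (fun y => ?_) (degLE_neg haff)
        rw [hfc_eq y, hg0 (B y)]
        ring
      have : D ≤ 1 := Nat.sInf_le hfc1
      omega
    have hle : D ≤ w := by
      have h1 : degLE g w := degLE_of_postcomp_fun _ hχadd hχinj hup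
      have h2 : degLE (fun y => g (B y)) w := hgB_of_g w h1
      have h3 : degLE fc w := by
        refine degLE_congr (fun y => (hfc_eq y).symm) (degLE_sub h2 (degLE_mono hw1 haff))
      exact Nat.sInf_le h3
    omega
  -- the power function itself has degree w
  obtain ⟨hupG, hlowG⟩ := power_component (p := p) hs1 (fun z : GaloisField p n => z)
    (fun a b => rfl)
  have hGne : ¬ degLE (fun y : GaloisField p n => y ^ s) (w - 1) := by
    intro h
    have := hlowG h 1
    rw [one_pow] at this
    exact one_ne_zero this
  -- transfer between F and the power function
  have hTF : ∀ d : ℕ, 1 ≤ d → degLE F d → degLE (fun y : GaloisField p n => y ^ s) d := by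
    intro d hd hF
    have h1 : degLE (fun x => F (A₂ x)) d :=
      degLE_precomp_affine A₂ L₂.toAddMonoidHom b₂ (fun x => hA₂ x) hF
    have h2 : degLE (fun x => L₁ (F (A₂ x))) d :=
      degLE_postcomp_fun _ (map_add L₁) h1
    have h3 : degLE (fun x => A₃ x + b₁) d := by
      refine degLE_mono hd (degLE_one_affine_fun _ L₃.toAddMonoidHom (b₃ + b₁) ?_)
      intro x
      rw [hA₃ x]
      show L₃ x + b₃ + b₁ = L₃ x + (b₃ + b₁)
      ring
    refine degLE_congr (fun x => ?_) (degLE_add d h2 h3)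
    have he : x ^ s = A₁ (F (A₂ x)) + A₃ x := hEq x
    show L₁ (F (A₂ x)) + (A₃ x + b₁) = x ^ s
    rw [he, hA₁]
    ring
  have hTF' : ∀ d : ℕ, 1 ≤ d → degLE (fun y : GaloisField p n => y ^ s) d → degLE F d := by
    intro d hd hG
    have h1 : degLE (fun y => (B y) ^ s) d :=
      degLE_precomp_affine B ψB (- E₂.symm b₂) hBaff hG
    have h2 : degLE (fun y => M ((B y) ^ s)) d := degLE_postcomp_fun _ hMadd h1
    have h3 : degLE (fun y => M (A₃ (B y)) + M b₁) d := by
      set Mhom : GaloisField p n →+ GaloisField p n := AddMonoidHom.mk' M hMadd with hMhom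
      refine degLE_mono hd (degLE_one_affine_fun _ (Mhom.comp (L₃.toAddMonoidHom.comp ψB))
        (M (L₃ (- E₂.symm b₂) + b₃) + M b₁) ?_)
      intro y
      show M (A₃ (B y)) + M b₁ = M (L₃ (ψB y)) + (M (L₃ (- E₂.symm b₂) + b₃) + M b₁)
      rw [hA₃, hBaff y, map_add L₃, add_assoc, hMadd]
      ring
    refine degLE_congr (fun y => ?_) (degLE_sub h2 h3)
    rw [hFy y]
    ring
  -- conclude
  have hwSF : degLE F w := hTF' w hw1 (degLE_congr (fun y => rfl) hupG)
  have hSFne : {d | degLE F d}.Nonempty := ⟨w, hwSF⟩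
  have hm₀mem : degLE F (algDeg F) := Nat.sInf_mem hSFne
  have hm₀le : algDeg F ≤ w := Nat.sInf_le hwSF
  have hm₀ge : w ≤ algDeg F := by
    by_contra hlt
    push_neg at hlt
    rcases Nat.eq_zero_or_pos (algDeg F) with h0 | h1
    · have : degLE F 1 := degLE_mono (by omega) (h0 ▸ hm₀mem)
      have := hTF 1 le_rfl this
      exact hGne (degLE_mono (by omega) this)
    · have := hTF (algDeg F) h1 hm₀mem
      exact hGne (degLE_mono (by omega) this)
  apply hDF
  omega
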